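/- Let R be a commutative ring and V an R-module. Let ε : ExteriorAlgebra R V → R be the canonical augmentation (ExteriorAlgebra.algebraMapInv) and let I = ker ε. Then the R-linear map V → I/I² obtained by composing ι : V → ExteriorAlgebra R V (whose image lies in I) with the quotient map I → I/I² is an isomorphism of R-modules. -/
import Mathlib


section

variable (R V : Type*) [CommRing R] [AddCommGroup V] [Module R V]

/-- The augmentation ideal `I = ker ε` of the exterior algebra (where
`ε = ExteriorAlgebra.algebraMapInv` is the canonical augmentation), viewed as an
`R`-submodule of `ExteriorAlgebra R V`. -/
noncomputable def ExteriorAlgebra.augIdeal : Submodule R (ExteriorAlgebra R V) :=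
  LinearMap.ker (ExteriorAlgebra.algebraMapInv (R := R) (M := V)).toLinearMap

theorem ExteriorAlgebra.ι_mem_augIdeal (v : V) :
    ExteriorAlgebra.ι R v ∈ ExteriorAlgebra.augIdeal R V := by
  simp [ExteriorAlgebra.augIdeal, LinearMap.mem_ker, ExteriorAlgebra.algebraMapInv,
    ExteriorAlgebra.lift_ι_apply]

/-- The square `I²` of the augmentation ideal, i.e. the `R`-submodule generated by products
of two elements of `I`. -/
noncomputable def ExteriorAlgebra.augIdealSq : Submodule R (ExteriorAlgebra R V) :=
  Submodule.span R
    {z | ∃ x ∈ ExteriorAlgebra.augIdeal R V, ∃ y ∈ ExteriorAlgebra.augIdeal R V, z = x * y}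

/-- The quotient `R`-module `I/I²`. -/
noncomputable def ExteriorAlgebra.augCotangent : Type _ :=
  ↥(ExteriorAlgebra.augIdeal R V) ⧸
    ((ExteriorAlgebra.augIdealSq R V).comap (ExteriorAlgebra.augIdeal R V).subtype)

noncomputable instance : AddCommGroup (ExteriorAlgebra.augCotangent R V) := by
  delta ExteriorAlgebra.augCotangent; infer_instance

noncomputable instance : Module R (ExteriorAlgebra.augCotangent R V) := by
  delta ExteriorAlgebra.augCotangent; infer_instance

/-- The `R`-linear map `V → I/I²` obtained by composing `ι : V → ExteriorAlgebra R V`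
(whose image lies in `I`) with the quotient map `I → I/I²`. -/
noncomputable def ExteriorAlgebra.ιCotangent : V →ₗ[R] ExteriorAlgebra.augCotangent R V :=
  (((ExteriorAlgebra.augIdealSq R V).comap
      (ExteriorAlgebra.augIdeal R V).subtype).mkQ).comp
    ((ExteriorAlgebra.ι R).codRestrict (ExteriorAlgebra.augIdeal R V)
      (ExteriorAlgebra.ι_mem_augIdeal R V))

end


section
variable {R V : Type*} [CommRing R] [AddCommGroup V] [Module R V]

lemma ExteriorAlgebra.ιInv_mul_eq_zero {x y : ExteriorAlgebra R V}
    (hx : ExteriorAlgebra.algebraMapInv (M := V) x = 0)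
    (hy : ExteriorAlgebra.algebraMapInv (M := V) y = 0) :
    ExteriorAlgebra.ιInv (x * y) = 0 := by
  letI : Module Rᵐᵒᵖ V := Module.compHom _ ((RingHom.id R).fromOpposite mul_comm)
  haveI : IsCentralScalar R V := ⟨fun r m => rfl⟩
  have hA : (TrivSqZeroExt.fstHom R R V).comp ExteriorAlgebra.toTrivSqZeroExt
      = ExteriorAlgebra.algebraMapInv (M := V) := by
    apply ExteriorAlgebra.hom_ext
    ext v
    simp [ExteriorAlgebra.toTrivSqZeroExt_ι, ExteriorAlgebra.algebraMapInv,
      ExteriorAlgebra.lift_ι_apply]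
  have hx' : (ExteriorAlgebra.toTrivSqZeroExt x).fst = 0 := by
    rw [← hA] at hx; exact hx
  have hy' : (ExteriorAlgebra.toTrivSqZeroExt y).fst = 0 := by
    rw [← hA] at hy; exact hy
  simp only [ExteriorAlgebra.ιInv, LinearMap.comp_apply, AlgHom.toLinearMap_apply, map_mul,
    TrivSqZeroExt.sndHom_apply, TrivSqZeroExt.snd_mul, hx', hy']
  simp

lemma ExteriorAlgebra.aux_mul_expand (a b : ExteriorAlgebra R V) (p q : R) :
    a * b - algebraMap R (ExteriorAlgebra R V) (p * q)
      = p • (b - algebraMap R _ q) + q • (a - algebraMap R _ p)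
        + (a - algebraMap R _ p) * (b - algebraMap R _ q) := by
  simp only [Algebra.smul_def, mul_sub, sub_mul, map_mul]
  rw [← Algebra.commutes q a, ← Algebra.commutes q (algebraMap R (ExteriorAlgebra R V) p)]
  abel

open ExteriorAlgebra in
lemma ExteriorAlgebra.key_span (x : ExteriorAlgebra R V) :
    x - algebraMap R _ (algebraMapInv (M := V) x) ∈
      LinearMap.range (ι R : V →ₗ[R] ExteriorAlgebra R V) ⊔ augIdealSq R V := by
  set T := LinearMap.range (ι R : V →ₗ[R] ExteriorAlgebra R V) ⊔ augIdealSq R V with hT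
  induction x using ExteriorAlgebra.induction with
  | algebraMap r => simp
  | ι v =>
      have : algebraMapInv (M := V) (ι R v) = 0 := by
        simp [algebraMapInv, lift_ι_apply]
      rw [this, map_zero, sub_zero]
      exact Submodule.mem_sup_left ⟨v, rfl⟩
  | add a b ha hb =>
      have := Submodule.add_mem T ha hb
      rw [map_add, map_add]
      convert this using 1
      abel
  | mul a b ha hb =>
      have hea : algebraMapInv (M := V)
          (a - algebraMap R _ (algebraMapInv (M := V) a)) = 0 := by
        simp [ExteriorAlgebra.algebraMap_leftInverse]
      have heb : algebraMapInv (M := V)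
          (b - algebraMap R _ (algebraMapInv (M := V) b)) = 0 := by
        simp [ExteriorAlgebra.algebraMap_leftInverse]
      have hmem : (a - algebraMap R _ (algebraMapInv (M := V) a))
          * (b - algebraMap R _ (algebraMapInv (M := V) b)) ∈ augIdealSq R V := by
        refine Submodule.subset_span ⟨_, ?_, _, ?_, rfl⟩ <;>
          simp [augIdeal, LinearMap.mem_ker, hea, heb]
      rw [map_mul, ExteriorAlgebra.aux_mul_expand]
      exact Submodule.add_mem T (Submodule.add_mem T (Submodule.smul_mem T _ hb)
        (Submodule.smul_mem T _ ha)) (Submodule.mem_sup_right hmem)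

end

/-- Let `R` be a commutative ring, `V` an `R`-module,
`ε : ExteriorAlgebra R V → R` the canonical augmentation, and `I = ker ε`. Then the `R`-linear
map `V → I/I²` obtained by composing `ι : V → ExteriorAlgebra R V` with the quotient map
`I → I/I²` is an isomorphism of `R`-modules (being `R`-linear, this means it is bijective). -/
theorem exteriorAlgebra_cotangent_iso (R V : Type*) [CommRing R] [AddCommGroup V]
    [Module R V] :
    Function.Bijective (ExteriorAlgebra.ιCotangent R V) := by
  classical
  have hker : ((ExteriorAlgebra.augIdealSq R V).comap
        (ExteriorAlgebra.augIdeal R V).subtype) ≤ LinearMap.ker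
        ((ExteriorAlgebra.ιInv (R := R) (M := V)).comp
          (ExteriorAlgebra.augIdeal R V).subtype) := by
    intro x hx
    simp only [Submodule.mem_comap] at hx
    have hx' : (x : ExteriorAlgebra R V) ∈ ExteriorAlgebra.augIdealSq R V := hx
    simp only [LinearMap.mem_ker, LinearMap.comp_apply, Submodule.subtype_apply]
    refine Submodule.span_induction ?_ ?_ ?_ ?_ hx'
    · rintro z ⟨a, ha, b, hb, rfl⟩
      exact ExteriorAlgebra.ιInv_mul_eq_zero ha hb
    · exact map_zero _
    · intro a b _ _ h1 h2; rw [map_add, h1, h2, add_zero]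
    · intro r a _ h; rw [map_smul, h, smul_zero]
  constructor
  · have hleft : ∀ v : V,
        (Submodule.liftQ _ _ hker) (ExteriorAlgebra.ιCotangent R V v) = v := fun v =>
      ExteriorAlgebra.ι_leftInverse v
    exact Function.LeftInverse.injective hleft
  · intro z
    obtain ⟨⟨x, hx⟩, rfl⟩ := Submodule.Quotient.mk_surjective _ z
    have hx0 : ExteriorAlgebra.algebraMapInv (M := V) x = 0 := hx
    have key := ExteriorAlgebra.key_span (R := R) (V := V) x
    rw [hx0, map_zero, sub_zero, Submodule.mem_sup] at key
    obtain ⟨y, ⟨v, rfl⟩, q, hq, hsum⟩ := key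
    refine ⟨v, ?_⟩
    show Submodule.Quotient.mk _ = Submodule.Quotient.mk _
    refine (Submodule.Quotient.eq _).mpr ?_
    rw [Submodule.mem_comap, Submodule.subtype_apply]
    have hcoe : (((ExteriorAlgebra.ι R).codRestrict (ExteriorAlgebra.augIdeal R V)
        (ExteriorAlgebra.ι_mem_augIdeal R V) v - ⟨x, hx⟩ :
        ↥(ExteriorAlgebra.augIdeal R V)) : ExteriorAlgebra R V)
        = ExteriorAlgebra.ι R v - x := rfl
    rw [hcoe, ← hsum]
    have : ExteriorAlgebra.ι R v - (ExteriorAlgebra.ι R v + q) = -q := by abel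
    rw [this]
    exact Submodule.neg_mem _ hq
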